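/- Comparison of Morse complexes via natural transformations: Let C and D be based complexes over an additive category with Morse matchings M and N respectively, and fix a homological degree i. Suppose F is a functor from the category of critical paths CP(C, M, i) to CP(D, N, i) that (1) sends unmatched cells bijectively to unmatched cells preserving homological degree, (2) induces for unmatched cells c_1, c_2 a bijection Mor(c_1, c_2) → Mor(F c_1, F c_2) such that each path p and F p have the same number of reversed edges modulo 2, and (3) admits a natural transformation γ : R_C ∘ I_C ⇒ R_D ∘ I_D ∘ F. Define f^i : (MC)^i → (ND)^i as the diagonal morphism with entries γ_c for critical cells c of degree i, and f^{i+1} similarly. Then f^{i+1} ∘ d^i_{MC} = ∂^i_{ND} ∘ f^i, i.e. the square formed by the Morse differentials and f^i, f^{i+1} commutes; moreover f^i and f^{i+1} are isomorphisms if all γ_c are. -/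

import Mathlib

/-!
STATEMENT 5: Comparison of Morse complexes via natural transformations. Given based
complexes `C`, `D` over an additive category with Morse matchings `M`, `N` and a fixed
homological degree `i₀`, suppose given the data of a functor `F` between the categories of
critical paths: a bijection `e₀`, `e₁` between the critical cells in degrees `i₀`, `i₀+1`,
bijections `Φ` between the sets of paths joining corresponding critical cells which
preserve the number of reversed edges mod 2, and a natural transformation
`γ : R_C ∘ I_C ⇒ R_D ∘ I_D ∘ F` (its components `γ₀`, `γ₁` at the critical cells, with
path-level naturality `R_C(p) ≫ γ = γ ≫ R_D(F p)`). Then the diagonal morphisms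
`f^{i₀}`, `f^{i₀+1}` with entries `γ` intertwine the Morse differentials, and are
isomorphisms if all components of `γ` are.
-/

open CategoryTheory CategoryTheory.Limits

namespace Stmt5

universe v u

variable (𝒞 : Type u) [Category.{v} 𝒞] [Preadditive 𝒞] [HasZeroObject 𝒞]
  [HasFiniteBiproducts 𝒞]

structure BasedComplex where
  J : ℤ → Type
  fin : ∀ i, Fintype (J i)
  bdd : ∃ N : ℕ, ∀ i : ℤ, (N : ℤ) < |i| → IsEmpty (J i)
  cell : ∀ i, J i → 𝒞
  d : ∀ i, (j : J i) → (k : J (i + 1)) → (cell i j ⟶ cell (i + 1) k)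
  dsq : ∀ i (j : J i) (l : J (i + 1 + 1)),
    ∑ k : J (i + 1), d i j k ≫ d (i + 1) k l = 0

attribute [instance] BasedComplex.fin

variable {𝒞}

def Vert (C : BasedComplex 𝒞) : Type := Σ i : ℤ, C.J i

abbrev MatchingData (C : BasedComplex 𝒞) : Type := Set (Σ i : ℤ, C.J i × C.J (i + 1))

def src {C : BasedComplex 𝒞} (m : Σ i : ℤ, C.J i × C.J (i + 1)) : Vert C := ⟨m.1, m.2.1⟩

def tgt {C : BasedComplex 𝒞} (m : Σ i : ℤ, C.J i × C.J (i + 1)) : Vert C :=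
  ⟨m.1 + 1, m.2.2⟩

def IsPartialMatching (C : BasedComplex 𝒞) (M : MatchingData C) : Prop :=
  ∀ m ∈ M, ∀ m' ∈ M, m ≠ m' →
    src m ≠ src m' ∧ src m ≠ tgt m' ∧ tgt m ≠ src m' ∧ tgt m ≠ tgt m'

def AllIso (C : BasedComplex 𝒞) (M : MatchingData C) : Prop :=
  ∀ m ∈ M, IsIso (C.d m.1 m.2.1 m.2.2)

inductive GStep (C : BasedComplex 𝒞) (M : MatchingData C) : Vert C → Vert C → Type
  | up {i : ℤ} (j : C.J i) (k : C.J (i + 1)) (hd : C.d i j k ≠ 0)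
      (hm : ⟨i, (j, k)⟩ ∉ M) : GStep C M ⟨i, j⟩ ⟨i + 1, k⟩
  | down {i : ℤ} (j : C.J i) (k : C.J (i + 1)) (hm : ⟨i, (j, k)⟩ ∈ M) :
      GStep C M ⟨i + 1, k⟩ ⟨i, j⟩

def GEdge (C : BasedComplex 𝒞) (M : MatchingData C) (v w : Vert C) : Prop :=
  Nonempty (GStep C M v w)

def HasCycle {V : Type*} (E : V → V → Prop) : Prop :=
  ∃ (n : ℕ) (f : ℕ → V), 0 < n ∧ f n = f 0 ∧ ∀ t < n, E (f t) (f (t + 1))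

inductive GPath (C : BasedComplex 𝒞) (M : MatchingData C) : Vert C → Vert C → Type
  | nil (v : Vert C) : GPath C M v v
  | cons {v w x : Vert C} (e : GStep C M v w) (p : GPath C M w x) : GPath C M v x

def cellOf (C : BasedComplex 𝒞) (v : Vert C) : 𝒞 := C.cell v.1 v.2

def stepDown {C : BasedComplex 𝒞} {M : MatchingData C} {v w : Vert C} :
    GStep C M v w → ℕ
  | .up _ _ _ _ => 0
  | .down _ _ _ => 1

def downCount {C : BasedComplex 𝒞} {M : MatchingData C} :
    ∀ {v w : Vert C}, GPath C M v w → ℕ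
  | _, _, .nil _ => 0
  | _, _, .cons e p => stepDown e + downCount p

noncomputable def stepHom {C : BasedComplex 𝒞} {M : MatchingData C}
    (hiso : AllIso C M) {v w : Vert C} : GStep C M v w → (cellOf C v ⟶ cellOf C w)
  | .up j k _ _ => C.d _ j k
  | .down (i := i) j k hm => by
      letI : IsIso (C.d i j k) := hiso ⟨i, (j, k)⟩ hm
      exact @inv _ _ _ _ (C.d i j k) this

noncomputable def pathHom {C : BasedComplex 𝒞} {M : MatchingData C}
    (hiso : AllIso C M) : ∀ {v w : Vert C}, GPath C M v w → (cellOf C v ⟶ cellOf C w)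
  | _, _, .nil _ => 𝟙 _
  | _, _, .cons e p => stepHom hiso e ≫ pathHom hiso p

def IsCritical (C : BasedComplex 𝒞) (M : MatchingData C) (v : Vert C) : Prop :=
  ∀ m ∈ M, src m ≠ v ∧ tgt m ≠ v

def Crit (C : BasedComplex 𝒞) (M : MatchingData C) (i : ℤ) : Type :=
  {j : C.J i // IsCritical C M ⟨i, j⟩}

noncomputable instance (C : BasedComplex 𝒞) (M : MatchingData C) (i : ℤ) :
    Fintype (Crit C M i) := by classical exact Subtype.fintype _

/-- The Morse differential in degree `i`: the matrix of signed sums over directed paths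
between critical cells. -/
noncomputable def morseD (C : BasedComplex 𝒞) (M : MatchingData C) (hiso : AllIso C M)
    (i : ℤ) :
    (⨁ fun c : Crit C M i => C.cell i c.1) ⟶
      (⨁ fun c' : Crit C M (i + 1) => C.cell (i + 1) c'.1) :=
  biproduct.matrix fun c c' =>
    ∑ᶠ p : GPath C M ⟨i, c.1⟩ ⟨i + 1, c'.1⟩, ((-1 : ℤ) ^ downCount p) • pathHom hiso p

section Aux

lemma finite_vert (C : BasedComplex 𝒞) : Finite (Vert C) := by
  obtain ⟨Nb, hN⟩ := C.bdd
  have hmem : ∀ v : Vert C, v.1 ∈ Set.Icc (-(Nb : ℤ)) (Nb : ℤ) := by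
    intro v
    by_contra h
    have habs : (Nb : ℤ) < |v.1| := by
      rw [Set.mem_Icc, ← abs_le] at h
      omega
    exact (hN v.1 habs).false v.2
  have hinjV : Function.Injective
      (fun v : Vert C => (⟨⟨v.1, hmem v⟩, v.2⟩ :
        Σ i : Set.Icc (-(Nb : ℤ)) (Nb : ℤ), C.J i.1)) := by
    rintro ⟨i, j⟩ ⟨i', j'⟩ h
    obtain ⟨h1, h2⟩ := Sigma.ext_iff.mp h
    obtain rfl : i = i' := congrArg Subtype.val h1
    simp only [heq_eq_eq] at h2
    subst h2
    rfl
  haveI : Finite (Set.Icc (-(Nb : ℤ)) (Nb : ℤ)) := (Set.finite_Icc _ _).to_subtype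
  exact Finite.of_injective _ hinjV

set_option linter.unusedSectionVars false

variable {C : BasedComplex 𝒞} {M : MatchingData C}

lemma gstep_heq : ∀ {v w v' w' : Vert C} (e : GStep C M v w) (e' : GStep C M v' w'),
    v = v' → w = w' → HEq e e' := by
  intro v w v' w' e e'
  cases e with
  | up j k hd hm =>
    cases e' with
    | up j' k' hd' hm' =>
      intro hv hw
      obtain rfl : _ = _ := congrArg Sigma.fst hv
      obtain rfl : j = j' := eq_of_heq (Sigma.ext_iff.mp hv).2
      obtain rfl : k = k' := eq_of_heq (Sigma.ext_iff.mp hw).2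
      rfl
    | down j' k' hm' =>
      intro hv hw
      exfalso
      have h1 := congrArg Sigma.fst hv
      have h2 := congrArg Sigma.fst hw
      simp only at h1 h2
      omega
  | down j k hm =>
    cases e' with
    | up j' k' hd' hm' =>
      intro hv hw
      exfalso
      have h1 := congrArg Sigma.fst hv
      have h2 := congrArg Sigma.fst hw
      simp only at h1 h2
      omega
    | down j' k' hm' =>
      intro hv hw
      obtain rfl : _ = _ := congrArg Sigma.fst hw
      obtain rfl : j = j' := eq_of_heq (Sigma.ext_iff.mp hw).2
      obtain rfl : k = k' := eq_of_heq (Sigma.ext_iff.mp hv).2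
      rfl

lemma gstep_subsingleton {v w : Vert C} (e₁ e₂ : GStep C M v w) : e₁ = e₂ :=
  eq_of_heq (gstep_heq e₁ e₂ rfl rfl)

def plen : ∀ {v w : Vert C}, GPath C M v w → ℕ
  | _, _, .nil _ => 0
  | _, _, .cons _ p => plen p + 1

def vfun : ∀ {v w : Vert C}, GPath C M v w → ℕ → Vert C
  | v, _, .nil _, _ => v
  | v, _, .cons _ _, 0 => v
  | _, _, .cons _ p, (n + 1) => vfun p n

lemma vfun_zero : ∀ {v w : Vert C} (p : GPath C M v w), vfun p 0 = v := by
  intro v w p; cases p <;> rfl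

lemma vfun_ge : ∀ {v w : Vert C} (p : GPath C M v w) (t : ℕ), plen p ≤ t → vfun p t = w := by
  intro v w p
  induction p with
  | nil => intro t _; rfl
  | cons e q ih =>
    intro t ht
    cases t with
    | zero => simp [plen] at ht
    | succ n => exact ih n (by simpa [plen] using ht)

lemma vfun_edge : ∀ {v w : Vert C} (p : GPath C M v w) (t : ℕ), t < plen p →
    GEdge C M (vfun p t) (vfun p (t + 1)) := by
  intro v w p
  induction p with
  | nil => intro t ht; simp [plen] at ht
  | cons e q ih =>
    intro t ht
    cases t with
    | zero =>
      show GEdge C M (vfun (GPath.cons e q) 0) (vfun q 0)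
      rw [vfun_zero (GPath.cons e q), vfun_zero q]
      exact ⟨e⟩
    | succ n => exact ih n (by simpa [plen] using ht)

lemma vfun_inj (hacyc : ¬ HasCycle (GEdge C M)) {v w : Vert C} (p : GPath C M v w)
    {s t : ℕ} (hst : s < t) (ht : t ≤ plen p) : vfun p s ≠ vfun p t := by
  intro h
  apply hacyc
  refine ⟨t - s, fun u => vfun p (s + u), by omega, ?_, ?_⟩
  · show vfun p (s + (t - s)) = vfun p (s + 0)
    rw [show s + (t - s) = t by omega, Nat.add_zero]
    exact h.symm
  · intro u hu
    show GEdge C M (vfun p (s + u)) (vfun p (s + (u + 1)))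
    rw [show s + (u + 1) = (s + u) + 1 by omega]
    exact vfun_edge p (s + u) (by omega)

lemma plen_lt (hacyc : ¬ HasCycle (GEdge C M)) {v w : Vert C} (p : GPath C M v w) :
    plen p < Nat.card (Vert C) := by
  haveI := finite_vert C
  have hinj : Function.Injective (fun t : Fin (plen p + 1) => vfun p (t : ℕ)) := by
    intro a b hab
    by_contra hne
    have hne' : (a : ℕ) ≠ (b : ℕ) := fun h => hne (Fin.ext h)
    rcases Nat.lt_or_ge (a : ℕ) (b : ℕ) with h | h
    · exact vfun_inj hacyc p h (Nat.lt_succ_iff.mp b.2) hab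
    · have h' : (b : ℕ) < (a : ℕ) := by omega
      exact vfun_inj hacyc p h' (Nat.lt_succ_iff.mp a.2) hab.symm
  have := Nat.card_le_card_of_injective _ hinj
  simpa using this

lemma gpath_ext : ∀ {v w : Vert C} (p q : GPath C M v w), plen p = plen q →
    (∀ t, vfun p t = vfun q t) → p = q := by
  intro v w p
  induction p with
  | nil =>
    intro q hl hv
    cases q with
    | nil => rfl
    | cons e r => simp [plen] at hl
  | cons e r ih =>
    intro q hl hv
    cases q with
    | nil => simp [plen] at hl
    | cons e' r' =>
      have h1 : vfun r 0 = vfun r' 0 := hv 1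
      rw [vfun_zero, vfun_zero] at h1
      subst h1
      have hr : r = r' := ih r' (by simpa [plen] using hl) (fun t => hv (t + 1))
      rw [hr, gstep_subsingleton e e']

lemma finite_gpath (hacyc : ¬ HasCycle (GEdge C M)) (v w : Vert C) :
    Finite (GPath C M v w) := by
  haveI := finite_vert C
  set nV := Nat.card (Vert C) with hnV
  apply Finite.of_injective (fun p : GPath C M v w =>
    ((fun t : Fin (nV + 1) => vfun p (t : ℕ)),
      (⟨plen p, by have := plen_lt hacyc p; omega⟩ : Fin (nV + 1))))
  intro p q h
  obtain ⟨h1, h2⟩ := Prod.ext_iff.mp h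
  have hl : plen p = plen q := congrArg Fin.val h2
  apply gpath_ext p q hl
  intro t
  by_cases ht : t < nV + 1
  · exact congrFun h1 ⟨t, ht⟩
  · rw [vfun_ge p t (by have := plen_lt hacyc p; omega),
      vfun_ge q t (by have := plen_lt hacyc q; omega)]

lemma neg_one_pow_congr {a b : ℕ} (h : a % 2 = b % 2) : ((-1 : ℤ)) ^ a = (-1) ^ b := by
  rcases Nat.even_or_odd a with ha | ha
  · have hb : Even b := by
      rw [Nat.even_iff] at ha ⊢; omega
    rw [ha.neg_one_pow, hb.neg_one_pow]
  · have hb : Odd b := by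
      rw [Nat.odd_iff] at ha ⊢; omega
    rw [ha.neg_one_pow, hb.neg_one_pow]

open Classical in
lemma matrix_diag_iso {α β : Type} [Fintype α] [Fintype β]
    (f : α → 𝒞) (g : β → 𝒞) (e : α ≃ β) (γ : ∀ a, f a ⟶ g (e a))
    (hγ : ∀ a, IsIso (γ a)) :
    IsIso (biproduct.matrix fun (a : α) (b : β) =>
      if h : e a = b then γ a ≫ eqToHom (by rw [h]) else 0) := by
  haveI := hγ
  have heq : (biproduct.matrix fun (a : α) (b : β) =>
      if h : e a = b then γ a ≫ eqToHom (by rw [h]) else 0)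
      = (biproduct.whiskerEquiv e (fun a => (asIso (γ a)).symm)).hom := by
    apply biproduct.hom_ext'
    intro a
    apply biproduct.hom_ext
    intro b
    simp only [biproduct.whiskerEquiv, Iso.symm_inv, asIso_hom, Category.assoc,
      biproduct.ι_matrix_assoc, biproduct.lift_π, biproduct.ι_desc_assoc, biproduct.ι_π]
    by_cases h : e a = b
    · subst h
      simp
    · simp [h]
  rw [heq]
  infer_instance

end Aux

open Classical in
theorem stmt5 (C D : BasedComplex 𝒞) (M : MatchingData C) (N : MatchingData D)
    -- `M` and `N` are Morse matchings:
    (hfinM : M.Finite) (hpmM : IsPartialMatching C M) (hisoC : AllIso C M)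
    (hacycC : ¬ HasCycle (GEdge C M))
    (hfinN : N.Finite) (hpmN : IsPartialMatching D N) (hisoD : AllIso D N)
    (hacycD : ¬ HasCycle (GEdge D N))
    (i₀ : ℤ)
    -- the functor `F` between the categories of critical paths, given by bijections on
    -- critical cells of degrees `i₀`, `i₀ + 1` ...
    (e₀ : Crit C M i₀ ≃ Crit D N i₀) (e₁ : Crit C M (i₀ + 1) ≃ Crit D N (i₀ + 1))
    -- ... and bijections on the path sets between corresponding critical cells
    (Φ : ∀ (c : Crit C M i₀) (c' : Crit C M (i₀ + 1)),
      GPath C M ⟨i₀, c.1⟩ ⟨i₀ + 1, c'.1⟩ ≃ GPath D N ⟨i₀, (e₀ c).1⟩ ⟨i₀ + 1, (e₁ c').1⟩)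
    -- preserving the number of reversed edges modulo 2
    (hpar : ∀ c c' p, downCount ((Φ c c') p) % 2 = downCount p % 2)
    -- the components of the natural transformation `γ : R_C ∘ I_C ⇒ R_D ∘ I_D ∘ F` at
    -- the critical cells ...
    (γ₀ : ∀ c : Crit C M i₀, (C.cell i₀ c.1 ⟶ D.cell i₀ (e₀ c).1))
    (γ₁ : ∀ c' : Crit C M (i₀ + 1), (C.cell (i₀ + 1) c'.1 ⟶ D.cell (i₀ + 1) (e₁ c').1))
    -- ... with (path-level) naturality
    (hnat : ∀ (c : Crit C M i₀) (c' : Crit C M (i₀ + 1))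
        (p : GPath C M ⟨i₀, c.1⟩ ⟨i₀ + 1, c'.1⟩),
      pathHom hisoC p ≫ γ₁ c' = γ₀ c ≫ pathHom hisoD ((Φ c c') p)) :
    -- Conclusion: the diagonal morphisms with entries `γ` intertwine the Morse
    -- differentials, and are isomorphisms if all the `γ` are.
    (morseD C M hisoC i₀ ≫
        (biproduct.matrix fun (c' : Crit C M (i₀ + 1)) (b : Crit D N (i₀ + 1)) =>
          if h : e₁ c' = b then γ₁ c' ≫ eqToHom (by rw [h]) else 0)
      = (biproduct.matrix fun (c : Crit C M i₀) (b : Crit D N i₀) =>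
          if h : e₀ c = b then γ₀ c ≫ eqToHom (by rw [h]) else 0) ≫
        morseD D N hisoD i₀) ∧
    ((∀ c, IsIso (γ₀ c)) →
      IsIso (biproduct.matrix fun (c : Crit C M i₀) (b : Crit D N i₀) =>
        if h : e₀ c = b then γ₀ c ≫ eqToHom (by rw [h]) else 0)) ∧
    ((∀ c', IsIso (γ₁ c')) →
      IsIso (biproduct.matrix fun (c' : Crit C M (i₀ + 1)) (b : Crit D N (i₀ + 1)) =>
        if h : e₁ c' = b then γ₁ c' ≫ eqToHom (by rw [h]) else 0)) := by
  classical
  have key : ∀ (c : Crit C M i₀) (c' : Crit C M (i₀ + 1)),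
      (∑ᶠ p : GPath C M ⟨i₀, c.1⟩ ⟨i₀ + 1, c'.1⟩,
          ((-1 : ℤ) ^ downCount p) • pathHom hisoC p) ≫ γ₁ c'
      = γ₀ c ≫ ∑ᶠ q : GPath D N ⟨i₀, (e₀ c).1⟩ ⟨i₀ + 1, (e₁ c').1⟩,
          ((-1 : ℤ) ^ downCount q) • pathHom hisoD q := by
    intro c c'
    haveI := finite_gpath hacycC ⟨i₀, c.1⟩ ⟨i₀ + 1, c'.1⟩
    haveI := finite_gpath hacycD ⟨i₀, (e₀ c).1⟩ ⟨i₀ + 1, (e₁ c').1⟩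
    letI : Fintype (GPath C M ⟨i₀, c.1⟩ ⟨i₀ + 1, c'.1⟩) := Fintype.ofFinite _
    letI : Fintype (GPath D N ⟨i₀, (e₀ c).1⟩ ⟨i₀ + 1, (e₁ c').1⟩) := Fintype.ofFinite _
    erw [finsum_eq_sum_of_fintype, finsum_eq_sum_of_fintype, Preadditive.sum_comp,
      Preadditive.comp_sum,
      ← Equiv.sum_comp (Φ c c')
        (fun q => γ₀ c ≫ (((-1 : ℤ) ^ downCount q) • pathHom hisoD q))]
    apply Finset.sum_congr rfl
    intro p _
    erw [Preadditive.zsmul_comp, Preadditive.comp_zsmul, hnat c c' p,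
      neg_one_pow_congr (hpar c c' p)]
    rfl
  refine ⟨?_, ?_, ?_⟩
  · apply biproduct.hom_ext
    intro b
    apply biproduct.hom_ext'
    intro c
    obtain ⟨c', rfl⟩ : ∃ c', e₁ c' = b := ⟨e₁.symm b, e₁.apply_symm_apply b⟩
    simp only [morseD, Category.assoc, biproduct.matrix_π, biproduct.ι_matrix_assoc,
      biproduct.lift_desc, comp_dite, dite_comp, comp_zero, zero_comp,
      EmbeddingLike.apply_eq_iff_eq, Finset.sum_dite_eq, Finset.sum_dite_eq',
      Finset.mem_univ, if_true, eqToHom_refl, Category.comp_id, Category.id_comp]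
    exact key c c'
  · intro hc
    exact matrix_diag_iso (fun c : Crit C M i₀ => C.cell i₀ c.1)
      (fun b : Crit D N i₀ => D.cell i₀ b.1) e₀ γ₀ hc
  · intro hc'
    exact matrix_diag_iso (fun c' : Crit C M (i₀ + 1) => C.cell (i₀ + 1) c'.1)
      (fun b : Crit D N (i₀ + 1) => D.cell (i₀ + 1) b.1) e₁ γ₁ hc'

end Stmt5
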